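/- For every positive integer n and every real x, the following identity between a real and a complex expression holds: sgn(−x)^(n−1) · (n−1)! / (1+x²)^(n/2) · sin( n · arcsin( 1/√(1+x²) ) ) = (−1)ⁿ (n−1)! / (2i) · ( 1/(x+i)ⁿ − 1/(x−i)ⁿ ), where sgn(y) = −1 if y < 0 and sgn(y) = 1 if y ≥ 0. -/

import Mathlib

/-- The modified signum function: `-1` for negative inputs, `1` otherwise. -/
noncomputable def sgn (y : ℝ) : ℝ := if y < 0 then -1 else 1

open Complex in
theorem sgn_sin_complex_identity (n : ℕ) (hn : 0 < n) (x : ℝ) :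
    ((sgn (-x) ^ (n - 1) * (Nat.factorial (n - 1) : ℝ) / (1 + x ^ 2) ^ ((n : ℝ) / 2) *
        Real.sin (n * Real.arcsin (1 / Real.sqrt (1 + x ^ 2))) : ℝ) : ℂ) =
      (-1) ^ n * (Nat.factorial (n - 1) : ℂ) / (2 * I) *
        (1 / ((x : ℂ) + I) ^ n - 1 / ((x : ℂ) - I) ^ n) := by
  set r : ℝ := Real.sqrt (1 + x ^ 2) with hrdef
  have h1x : (0:ℝ) < 1 + x ^ 2 := by positivity
  have hr : 0 < r := Real.sqrt_pos.2 h1x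
  have hr2 : r ^ 2 = 1 + x ^ 2 := Real.sq_sqrt h1x.le
  set θ : ℝ := Real.arcsin (1 / r) with hθdef
  set φ : ℝ := Complex.arg ((x : ℂ) + I) with hφdef
  have hzne : ((x : ℂ) + I) ≠ 0 := by
    intro h
    have := congrArg Complex.im h
    simp at this
  have habs : ‖(x : ℂ) + I‖ = r := by
    rw [hrdef, Complex.norm_def, Complex.normSq_apply]
    simp [add_comm, pow_two]
  have hrpow : (1 + x ^ 2) ^ ((n : ℝ) / 2) = r ^ n := by
    rw [← hr2, ← Real.rpow_natCast r 2, ← Real.rpow_mul hr.le,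
      show ((2:ℕ):ℝ) * ((n:ℝ)/2) = (n:ℝ) by push_cast; ring, Real.rpow_natCast]
  have hzn : ((x : ℂ) + I) ^ n =
      (r : ℂ) ^ n * (Real.cos (n * φ) + Real.sin (n * φ) * I) := by
    conv_lhs => rw [← Complex.norm_mul_exp_arg_mul_I ((x : ℂ) + I)]
    rw [habs, mul_pow, ← Complex.exp_nat_mul, ← hφdef]
    rw [show ((n : ℂ) * (↑φ * I)) = ((n * φ : ℝ) : ℂ) * I by push_cast; ring,
      Complex.exp_mul_I]
    push_cast
    ring
  have hwn : ((x : ℂ) - I) ^ n =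
      (r : ℂ) ^ n * (Real.cos (n * φ) - Real.sin (n * φ) * I) := by
    have hconj : ((x : ℂ) - I) = (starRingEnd ℂ) ((x : ℂ) + I) := by
      simp [Complex.conj_I, sub_eq_add_neg]
    rw [hconj, ← map_pow, hzn]
    simp only [map_mul, map_pow, map_add, Complex.conj_ofReal, Complex.conj_I]
    ring
  have h2 : ((-1:ℝ)) ^ (n + 1) * (-1:ℝ) ^ n = -1 := by
    rw [← pow_add, show n + 1 + n = 2 * n + 1 by ring]
    exact Odd.neg_one_pow ⟨n, by ring⟩
  have hkey : sgn (-x) ^ (n - 1) * Real.sin (n * θ) =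
      (-1 : ℝ) ^ (n + 1) * Real.sin (n * φ) := by
    rcases lt_trichotomy x 0 with hx | hx | hx
    · have hsgn : sgn (-x) = 1 := by simp [sgn, not_lt.2 (neg_nonneg.2 hx.le)]
      have hφθ : φ = Real.pi - θ := by
        rw [hφdef, Complex.arg_of_re_neg_of_im_nonneg (by simpa using hx) (by simp)]
        simp only [Complex.neg_im, Complex.add_im, Complex.ofReal_im, Complex.I_im,
          habs, hθdef]
        rw [show (-(0 + 1) : ℝ) / r = -(1 / r) by ring, Real.arcsin_neg]
        ring
      rw [hsgn, one_pow, hφθ, mul_sub, Real.sin_nat_mul_pi_sub]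
      linear_combination Real.sin (↑n * θ) * h2
    · subst hx
      have hr1 : r = 1 := by rw [hrdef]; norm_num
      have hθval : θ = Real.pi / 2 := by
        rw [hθdef, hr1]
        norm_num [Real.arcsin_one]
      have hφval : φ = Real.pi / 2 := by
        rw [hφdef]
        norm_num [Complex.arg_I]
      have hsgn : sgn (-(0:ℝ)) = 1 := by norm_num [sgn]
      rw [hsgn, one_pow, hθval, hφval]
      rcases Nat.even_or_odd n with he | ho
      · obtain ⟨k, hk⟩ := he
        have hnn : (n : ℝ) * (Real.pi / 2) = k * Real.pi := by
          rw [hk]; push_cast; ring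
        simp [hnn, Real.sin_nat_mul_pi]
      · rw [Even.neg_one_pow ho.add_one, one_mul]
    · have hsgn : sgn (-x) = -1 := by simp [sgn, hx]
      have hφθ : φ = θ := by
        rw [hφdef, Complex.arg_of_re_nonneg (by simpa using hx.le)]
        simp [habs, hθdef]
      rw [hφθ, hsgn]
      obtain ⟨m, rfl⟩ : ∃ m, n = m + 1 := ⟨n - 1, (Nat.succ_pred_eq_of_pos hn).symm⟩
      simp [pow_succ]
  -- the real-side simplification
  have hLHS : sgn (-x) ^ (n - 1) * (Nat.factorial (n - 1) : ℝ) /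
      (1 + x ^ 2) ^ ((n : ℝ) / 2) * Real.sin (n * θ) =
      (-1) ^ (n + 1) * (Nat.factorial (n - 1) : ℝ) * Real.sin (n * φ) / r ^ n := by
    rw [hrpow]
    field_simp
    linear_combination hkey
  rw [hLHS]
  -- complex side
  set c : ℝ := Real.cos (n * φ)
  set s : ℝ := Real.sin (n * φ)
  have hP : ((c : ℂ) + s * I) * ((c : ℂ) - s * I) = 1 := by
    have h1 : c ^ 2 + s ^ 2 = 1 := Real.cos_sq_add_sin_sq _
    have h1' : ((c : ℂ)) ^ 2 + (s : ℂ) ^ 2 = 1 := by exact_mod_cast h1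
    linear_combination h1' - (s : ℂ) ^ 2 * Complex.I_sq
  have hCinv : ((c : ℂ) + s * I)⁻¹ = ((c : ℂ) - s * I) :=
    inv_eq_of_mul_eq_one_right hP
  have hDinv : ((c : ℂ) - s * I)⁻¹ = ((c : ℂ) + s * I) :=
    inv_eq_of_mul_eq_one_left hP
  have hrn : ((r : ℂ)) ^ n ≠ 0 := pow_ne_zero _ (by exact_mod_cast hr.ne')
  have hAB : 1 / ((x : ℂ) + I) ^ n - 1 / ((x : ℂ) - I) ^ n =
      (-2) * I * s / (r : ℂ) ^ n := by
    rw [hzn, hwn, one_div, mul_inv, hCinv, one_div, mul_inv, hDinv]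
    field_simp
    ring
  rw [hAB]
  have hI : (2 : ℂ) * I ≠ 0 := by simp [Complex.I_ne_zero]
  push_cast
  field_simp
  ring
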